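/- Let F : Ω → L(K, H) be holomorphic with h := F*F invertible, and set P := F·h^{-1}·F*. Then P is an extended holomorphic curve, i.e. (∂̄P(λ))·P(λ) = 0 for all λ ∈ Ω (equivalently ∂̄P = P·∂̄P). -/

import Mathlib

open Complex ContinuousLinearMap

/-- Wirtinger derivative ∂ = ∂/∂λ. -/
noncomputable def pd {E : Type*} [NormedAddCommGroup E] [NormedSpace ℂ E]
    (f : ℂ → E) : ℂ → E :=
  fun z => (2⁻¹ : ℂ) • (fderiv ℝ f z 1 - Complex.I • fderiv ℝ f z Complex.I)

/-- Wirtinger derivative ∂̄ = ∂/∂λ̄. -/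
noncomputable def pdbar {E : Type*} [NormedAddCommGroup E] [NormedSpace ℂ E]
    (f : ℂ → E) : ℂ → E :=
  fun z => (2⁻¹ : ℂ) • (fderiv ℝ f z 1 + Complex.I • fderiv ℝ f z Complex.I)

section Aux

variable {A B C : Type*} [NormedAddCommGroup A] [NormedSpace ℂ A]
  [NormedAddCommGroup B] [NormedSpace ℂ B] [NormedAddCommGroup C] [NormedSpace ℂ C]

/-- Composition of `ℂ`-linear CLMs is a bounded `ℝ`-bilinear map. -/
theorem isBoundedBilinearMap_compR :
    IsBoundedBilinearMap ℝ (fun p : (B →L[ℂ] C) × (A →L[ℂ] B) => p.1.comp p.2) where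
  add_left x₁ x₂ y := add_comp x₁ x₂ y
  smul_left c x y := smul_comp c x y
  add_right x y₁ y₂ := comp_add x y₁ y₂
  smul_right c x y := comp_smul x c y
  bound := ⟨1, one_pos, fun x y => by simpa using opNorm_comp_le x y⟩

theorem HasFDerivAt.clm_compR {E : Type*} [NormedAddCommGroup E] [NormedSpace ℝ E]
    {c : E → B →L[ℂ] C} {d : E → A →L[ℂ] B} {c' : E →L[ℝ] B →L[ℂ] C}
    {d' : E →L[ℝ] A →L[ℂ] B} {x : E}
    (hc : HasFDerivAt c c' x) (hd : HasFDerivAt d d' x) :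
    HasFDerivAt (fun y => (c y).comp (d y))
      (((isBoundedBilinearMap_compR (A := A) (B := B) (C := C)).deriv
        (c x, d x)).comp (c'.prod d')) x :=
  by have := ((isBoundedBilinearMap_compR (A := A) (B := B) (C := C)).hasFDerivAt
    (c x, d x)).comp x (hc.prodMk hd); exact this

variable {H K : Type*} [NormedAddCommGroup H] [InnerProductSpace ℂ H] [CompleteSpace H]
  [NormedAddCommGroup K] [InnerProductSpace ℂ K] [CompleteSpace K]

/-- The adjoint as a continuous `ℝ`-linear map. -/
noncomputable def adjR (K H : Type*) [NormedAddCommGroup H] [InnerProductSpace ℂ H]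
    [CompleteSpace H] [NormedAddCommGroup K] [InnerProductSpace ℂ K] [CompleteSpace K] :
    (K →L[ℂ] H) →L[ℝ] (H →L[ℂ] K) :=
  LinearMap.mkContinuous
    { toFun := fun T => ContinuousLinearMap.adjoint T
      map_add' := fun S T => by simp [map_add]
      map_smul' := fun r T => by
        simp only [RingHom.id_apply]
        show ContinuousLinearMap.adjoint (r • T) = r • ContinuousLinearMap.adjoint T
        rw [← algebraMap_smul ℂ r T, map_smulₛₗ]
        simp
        }
    1 (fun T => by simp [LinearIsometryEquiv.norm_map])

@[simp] theorem adjR_apply (T : K →L[ℂ] H) :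
    adjR K H T = ContinuousLinearMap.adjoint T := rfl

theorem adjoint_I_smul (T : K →L[ℂ] H) :
    ContinuousLinearMap.adjoint (Complex.I • T)
      = -Complex.I • ContinuousLinearMap.adjoint T := by
  rw [map_smulₛₗ]
  simp

end Aux

set_option maxHeartbeats 1000000 in
theorem stmt4
    {H K : Type*} [NormedAddCommGroup H] [InnerProductSpace ℂ H] [CompleteSpace H]
    [NormedAddCommGroup K] [InnerProductSpace ℂ K] [CompleteSpace K]
    (Ω : Set ℂ) (hΩ : IsOpen Ω)
    (F : ℂ → K →L[ℂ] H)
    (hF : DifferentiableOn ℂ F Ω)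
    (h : ℂ → K →L[ℂ] K)
    (hdef : ∀ z ∈ Ω, h z = ContinuousLinearMap.adjoint (F z) ∘L F z)
    (hinv : ∀ z ∈ Ω, IsUnit (h z))
    (P : ℂ → H →L[ℂ] H)
    (hP : ∀ z ∈ Ω, P z = F z ∘L Ring.inverse (h z) ∘L ContinuousLinearMap.adjoint (F z)) :
    ∀ z ∈ Ω, (pdbar P z) * P z = 0 ∧ pdbar P z = P z * pdbar P z := by
  intro z hz
  have hzΩ : Ω ∈ nhds z := hΩ.mem_nhds hz
  have hFc : DifferentiableAt ℂ F z := hF.differentiableAt hzΩ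
  set f' : ℂ →L[ℝ] (K →L[ℂ] H) := (fderiv ℂ F z).restrictScalars ℝ with hf'
  have hFd : HasFDerivAt F f' z := hFc.hasFDerivAt.restrictScalars ℝ
  set f1 : K →L[ℂ] H := fderiv ℂ F z 1 with hf1
  have hf'v : ∀ v : ℂ, f' v = v • f1 := by
    intro v
    calc f' v = fderiv ℂ F z (v • 1) := by simp [hf']
    _ = v • f1 := by rw [map_smul, hf1]
  obtain ⟨u, hu⟩ := hinv z hz
  -- abbreviations
  set Fz : K →L[ℂ] H := F z with hFz
  set Az : H →L[ℂ] K := ContinuousLinearMap.adjoint (F z) with hAz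
  set Q : K →L[ℂ] K := (↑u⁻¹ : K →L[ℂ] K) with hQ
  have hRinv : Ring.inverse (h z) = Q := by rw [← hu, Ring.inverse_unit]
  have hPz : P z = Fz ∘L (Q ∘L Az) := by rw [hP z hz, hRinv]
  have hAzFz : Az ∘L Fz = h z := (hdef z hz).symm
  have hQh : Q ∘L h z = 1 := by
    rw [← ContinuousLinearMap.mul_def, hQ, ← hu, Units.inv_mul]
  -- derivatives
  have hAd : HasFDerivAt (fun w => adjR K H (F w)) ((adjR K H).comp f') z :=
    (adjR K H).hasFDerivAt.comp z hFd
  have hheq : (fun w => (adjR K H (F w)).comp (F w)) =ᶠ[nhds z] h := by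
    filter_upwards [hzΩ] with w hw
    simp [hdef w hw]
  have hhd : HasFDerivAt h
      ((isBoundedBilinearMap_compR.deriv (adjR K H (F z), F z)).comp
        (((adjR K H).comp f').prod f')) z :=
    (hAd.clm_compR hFd).congr_of_eventuallyEq hheq.symm
  have hIu : HasFDerivAt Ring.inverse
      (-mulLeftRight ℝ (K →L[ℂ] K) ↑u⁻¹ ↑u⁻¹) (h z) := hu ▸ hasFDerivAt_ringInverse u
  have hInvd : HasFDerivAt (fun w => Ring.inverse (h w))
      ((-mulLeftRight ℝ (K →L[ℂ] K) ↑u⁻¹ ↑u⁻¹).comp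
        ((isBoundedBilinearMap_compR.deriv (adjR K H (F z), F z)).comp
          (((adjR K H).comp f').prod f'))) z := hIu.comp z hhd
  have hNd := hInvd.clm_compR hAd
  have hPd0 := hFd.clm_compR hNd
  have hPeq : (fun w => (F w).comp ((Ring.inverse (h w)).comp (adjR K H (F w))))
      =ᶠ[nhds z] P := by
    filter_upwards [hzΩ] with w hw
    rw [hP w hw]
    rfl
  have hPd := hPd0.congr_of_eventuallyEq hPeq.symm
  have hDP : ∀ v : ℂ, fderiv ℝ P z v =
      Fz ∘L ((Q ∘L ContinuousLinearMap.adjoint (f' v))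
          + (-(Q * ((Az ∘L f' v) + (ContinuousLinearMap.adjoint (f' v) ∘L Fz)) * Q)) ∘L Az)
        + (f' v) ∘L (Q ∘L Az) := by
    intro v
    rw [hPd.fderiv]
    simp only [ContinuousLinearMap.coe_comp', Function.comp_apply,
      IsBoundedBilinearMap.deriv_apply, ContinuousLinearMap.prod_apply,
      ContinuousLinearMap.add_apply, ContinuousLinearMap.neg_apply,
      mulLeftRight_apply, adjR_apply, hRinv, ← hQ, ← hFz, ← hAz]
    rfl
  -- the key formula for pdbar P z
  set X : H →L[ℂ] H := Fz ∘L (Q ∘L ContinuousLinearMap.adjoint f1) with hX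
  have key : pdbar P z = X - X ∘L P z := by
    rw [pdbar, hDP 1, hDP Complex.I, hf'v 1, hf'v Complex.I, one_smul, hX, hPz]
    simp only [adjoint_I_smul, ContinuousLinearMap.mul_def]
    simp only [comp_smul, smul_comp, neg_smul, smul_neg, neg_comp, comp_neg,
      smul_smul, Complex.I_mul_I, neg_neg, one_smul, neg_one_smul, comp_add,
      add_comp, smul_add, add_smul]
    simp only [ContinuousLinearMap.comp_assoc]
    module
  have hPP : P z ∘L P z = P z := by
    rw [hPz]
    rw [show (Fz ∘L (Q ∘L Az)) ∘L Fz ∘L (Q ∘L Az)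
        = Fz ∘L ((Q ∘L ((Az ∘L Fz) ∘L Q)) ∘L Az) by
      simp only [ContinuousLinearMap.comp_assoc]]
    rw [hAzFz]
    rw [show Q ∘L (h z ∘L Q) = (Q ∘L h z) ∘L Q by simp only [ContinuousLinearMap.comp_assoc]]
    rw [hQh, ContinuousLinearMap.one_def, ContinuousLinearMap.id_comp]
  have hPFz : P z ∘L Fz = Fz := by
    rw [hPz]
    rw [show (Fz ∘L (Q ∘L Az)) ∘L Fz = Fz ∘L (Q ∘L (Az ∘L Fz)) by
      simp only [ContinuousLinearMap.comp_assoc]]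
    rw [hAzFz, hQh, ContinuousLinearMap.one_def, ContinuousLinearMap.comp_id]
  have hPX : P z ∘L X = X := by
    rw [hX, ← ContinuousLinearMap.comp_assoc, hPFz]
  constructor
  · rw [key, ContinuousLinearMap.mul_def, sub_comp]
    have hXPP : (X ∘L P z) ∘L P z = X ∘L P z := by
      rw [ContinuousLinearMap.comp_assoc, hPP]
    rw [hXPP, sub_self]
  · have hPXP : P z ∘L (X ∘L P z) = X ∘L P z := by
      conv_lhs => rw [← ContinuousLinearMap.comp_assoc]
      rw [hPX]
    rw [key, ContinuousLinearMap.mul_def, comp_sub, hPX, hPXP]
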